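/- arXiv:1512.05182 — 5 statements merged into one kernel-verified Lean document; each statement's English description precedes it below -/
import Mathlib

section
/- Let G be a connected finite multigraph and f : V(G) → ℤ⁺. Suppose some vertex subset S satisfies o(G − S) ≥ f(S) + 1. Color each end of each edge red if its incident vertex lies in S, and green otherwise. Then G has no spanning subgraph F with Φ_F(v) ∈ J_f*(v) for all vertices v. -/
/-- A finite multigraph on vertex type `V` with edge type `E`: each edge `e` assigns to
each vertex the number of ends of `e` at that vertex (two ends in total, so a loop has
both ends at one vertex, and a non-loop edge has one end at each of two vertices). -/
structure Multigraph (V E : Type*) [Fintype V] where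
  inc : E → V → ℕ
  degSum : ∀ e, ∑ v, inc e v = 2

namespace Multigraph

variable {V E : Type*} [Fintype V]

/-- A 2-end-coloring of a multigraph, encoded by weights: each red end contributes `+1`
and each green end `-1` at its incident vertex, so a red loop gives `+2`, a green loop
`-2` (both ends of a loop automatically receive the same color in this encoding),
and a non-loop edge gives `±1` at each of its two endpoints. -/
def IsColoring (M : Multigraph V E) (w : E → V → ℤ) : Prop :=
  ∀ e v, (w e v).natAbs = M.inc e v

/-- Two vertices of a multigraph are adjacent if some (non-loop) edge joins them. -/
def graph (M : Multigraph V E) : SimpleGraph V where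
  Adj u v := u ≠ v ∧ ∃ e, 0 < M.inc e u ∧ 0 < M.inc e v
  symm := ⟨by rintro u v ⟨h, e, h1, h2⟩; exact ⟨h.symm, e, h2, h1⟩⟩
  loopless := ⟨by rintro v ⟨h, -⟩; exact h rfl⟩

/-- The number of odd-order connected components of `G - S`. -/
noncomputable def oddComp (M : Multigraph V E) (S : Set V) : ℕ :=
  Nat.card {c : (M.graph.induce Sᶜ).ConnectedComponent // Odd (Nat.card c.supp)}

/-- The colored degree `Φ_F(v)` of a vertex `v` in the subgraph determined by the
edge subset `F`, under the 2-end-coloring `w`. -/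
def cdeg (w : E → V → ℤ) (F : Finset E) (v : V) : ℤ := ∑ e ∈ F, w e v

end Multigraph

/-- `J_f*(v)`: all negative odd integers, together with all positive odd integers at
most `f v`, and also `f v` itself when `f v` is even. -/
def Jstar {V : Type*} (f : V → ℕ) (v : V) : Set ℤ :=
  {k | (Odd k ∧ k < 0) ∨ (Odd k ∧ 0 < k ∧ k ≤ (f v : ℤ)) ∨ (Even (f v) ∧ k = (f v : ℤ))}

/-- Necessity construction: if `o(G - S) ≥ f(S) + 1` and each end is colored red iff
its incident vertex lies in `S`, then the connected multigraph `G` has no spanning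
subgraph `F` with `Φ_F(v) ∈ J_f*(v)` for all `v`. -/
theorem no_colored_Jstar_factor {V E : Type*} [Fintype V] [Fintype E]
    (M : Multigraph V E) (hconn : M.graph.Connected)
    (f : V → ℕ) (hf : ∀ v, 0 < f v) (S : Finset V)
    (hS : (∑ v ∈ S, f v) + 1 ≤ M.oddComp ↑S)
    (w : E → V → ℤ) (hw : M.IsColoring w)
    (hcol : ∀ e v, 0 < M.inc e v → ((v ∈ S → 0 < w e v) ∧ (v ∉ S → w e v < 0))) :
    ¬ ∃ F : Finset E, ∀ v, Multigraph.cdeg w F v ∈ Jstar f v := by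
  classical
  rintro ⟨F, hF⟩
  set degF : V → ℕ := fun v => ∑ e ∈ F, M.inc e v with hdegF
  -- weights determined by the coloring
  have hwS : ∀ v ∈ S, ∀ e, w e v = (M.inc e v : ℤ) := by
    intro v hv e
    have h1 := hw e v
    rcases Nat.eq_zero_or_pos (M.inc e v) with h0 | hpos
    · omega
    · have := (hcol e v hpos).1 hv; omega
  have hwSc : ∀ v ∉ S, ∀ e, w e v = -(M.inc e v : ℤ) := by
    intro v hv e
    have h1 := hw e v
    rcases Nat.eq_zero_or_pos (M.inc e v) with h0 | hpos
    · omega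
    · have := (hcol e v hpos).2 hv; omega
  have hcdegS : ∀ v ∈ S, Multigraph.cdeg w F v = (degF v : ℤ) := by
    intro v hv
    rw [hdegF]; push_cast
    exact Finset.sum_congr rfl fun e _ => hwS v hv e
  have hcdegSc : ∀ v ∉ S, Multigraph.cdeg w F v = -(degF v : ℤ) := by
    intro v hv
    rw [hdegF]; push_cast [← Finset.sum_neg_distrib]
    exact Finset.sum_congr rfl fun e _ => hwSc v hv e
  -- degrees outside S are odd
  have hOddOut : ∀ v ∉ S, Odd (degF v) := by
    intro v hv
    have h := hF v
    rw [hcdegSc v hv] at h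
    rcases h with ⟨hodd, _⟩ | ⟨_, hpos, _⟩ | ⟨_, heq⟩
    · have : Odd ((degF v : ℤ)) := by
        rcases hodd with ⟨k, hk⟩; exact ⟨-k - 1, by omega⟩
      rcases this with ⟨k, hk⟩
      exact ⟨k.toNat, by omega⟩
    · omega
    · have := hf v; omega
  -- degrees inside S are at most f
  have hLeIn : ∀ v ∈ S, degF v ≤ f v := by
    intro v hv
    have h := hF v
    rw [hcdegS v hv] at h
    rcases h with ⟨_, hneg⟩ | ⟨_, _, hle⟩ | ⟨_, heq⟩ <;> omega
  -- ends inside / outside S per edge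
  set sInc : E → ℕ := fun e => ∑ v ∈ S, M.inc e v with hsInc
  have hsplit : ∀ e, sInc e + ∑ v ∈ Sᶜ, M.inc e v = 2 := by
    intro e
    rw [hsInc]
    simp only []
    rw [Finset.sum_add_sum_compl]
    exact M.degSum e
  -- components
  set G' := M.graph.induce ((↑S : Set V)ᶜ) with hG'
  set T : G'.ConnectedComponent → Finset ((↑S : Set V)ᶜ : Set V) :=
    fun c => (Set.toFinite c.supp).toFinset with hT
  have hmemT : ∀ c (v : ((↑S : Set V)ᶜ : Set V)), v ∈ T c ↔ G'.connectedComponentMk v = c := by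
    intro c v; rw [hT]; simp [SimpleGraph.ConnectedComponent.mem_supp_iff]
  have hTcard : ∀ c : G'.ConnectedComponent, (T c).card = Nat.card c.supp := by
    intro c
    rw [hT]
    simp only []
    rw [Nat.card_coe_set_eq, Set.ncard_eq_toFinset_card c.supp (Set.toFinite _)]
  -- image of T in V
  set TV : G'.ConnectedComponent → Finset V := fun c => (T c).image Subtype.val with hTV
  have hsumTV : ∀ c (g : V → ℕ), ∑ u ∈ TV c, g u = ∑ v ∈ T c, g ↑v := by
    intro c g
    rw [hTV]
    exact Finset.sum_image (fun a _ b _ h => Subtype.val_injective h)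
  have hTVsub : ∀ c, TV c ⊆ Sᶜ := by
    intro c u hu
    rw [hTV] at hu
    obtain ⟨v, _, rfl⟩ := Finset.mem_image.mp hu
    exact Finset.mem_compl.mpr v.2
  -- key: every odd component sends an edge of F to S
  have hkey : ∀ c : G'.ConnectedComponent, Odd (Nat.card c.supp) →
      ∃ e ∈ F, sInc e = 1 ∧ ∑ v ∈ T c, M.inc e ↑v = 1 := by
    intro c hc
    -- the sum of degrees over the component is odd
    have hoddsum : Odd (∑ v ∈ T c, degF ↑v) := by
      rw [Nat.odd_iff, Finset.sum_nat_mod]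
      have : ∀ v ∈ T c, degF ↑v % 2 = 1 := by
        intro v _
        have h2 : (↑v : V) ∉ S := v.2
        have h6 := Nat.odd_iff.mp (hOddOut _ h2)
        omega
      rw [Finset.sum_congr rfl this, Finset.sum_const, smul_eq_mul, mul_one]
      have h3 := hTcard c
      have h4 := Nat.odd_iff.mp hc
      omega
    -- so some edge has an odd number of ends in the component
    have hex : ∃ e ∈ F, ¬ Even (∑ v ∈ T c, M.inc e ↑v) := by
      by_contra hco
      push_neg at hco
      have : Even (∑ e ∈ F, ∑ v ∈ T c, M.inc e ↑v) := by
        rw [Nat.even_iff, Finset.sum_nat_mod]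
        have h5 : ∀ e ∈ F, (∑ v ∈ T c, M.inc e ↑v) % 2 = 0 := fun e he =>
          Nat.even_iff.mp (hco e he)
        rw [Finset.sum_congr rfl h5, Finset.sum_const, smul_eq_mul, mul_zero]
        rfl
      rw [Finset.sum_comm] at this
      exact (Nat.not_even_iff_odd.mpr hoddsum) this
    obtain ⟨e, heF, hodd⟩ := hex
    rw [Nat.not_even_iff_odd, Nat.odd_iff] at hodd
    -- at most 2 ends outside S
    have hub : ∑ v ∈ T c, M.inc e ↑v + sInc e ≤ 2 := by
      have h1 : ∑ v ∈ T c, M.inc e ↑v ≤ ∑ u ∈ Sᶜ, M.inc e u := by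
        rw [← hsumTV c]
        exact Finset.sum_le_sum_of_subset (hTVsub c)
      have := hsplit e
      omega
    have hc1 : ∑ v ∈ T c, M.inc e ↑v = 1 := by omega
    refine ⟨e, heF, ?_, hc1⟩
    -- show sInc e = 1; it is ≤ 1, show it is not 0
    by_contra hs0
    have hs0 : sInc e = 0 := by omega
    have hsc2 : ∑ u ∈ Sᶜ, M.inc e u = 2 := by have := hsplit e; omega
    -- the other end is in Sᶜ but outside c, giving an adjacency into c: contradiction
    have hsub := hTVsub c
    have hsd : ∑ u ∈ Sᶜ \ TV c, M.inc e u = 1 := by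
      have h7 : ∑ u ∈ Sᶜ \ TV c, M.inc e u + ∑ u ∈ TV c, M.inc e u
          = ∑ u ∈ Sᶜ, M.inc e u := Finset.sum_sdiff hsub
      rw [hsumTV c] at h7
      omega
    obtain ⟨u, hu, hune⟩ : ∃ u ∈ Sᶜ \ TV c, M.inc e u ≠ 0 :=
      Finset.exists_ne_zero_of_sum_ne_zero (by omega)
    obtain ⟨v, hv, hvne⟩ : ∃ v ∈ T c, M.inc e ↑v ≠ 0 :=
      Finset.exists_ne_zero_of_sum_ne_zero (s := T c) (f := fun v => M.inc e ↑v)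
        (by rw [hc1]; exact one_ne_zero)
    have huSc : u ∈ ((↑S : Set V)ᶜ : Set V) := by
      have := (Finset.mem_sdiff.mp hu).1
      simpa using this
    have huv : u ≠ ↑v := by
      rintro rfl
      exact (Finset.mem_sdiff.mp hu).2 (by
        rw [hTV]
        exact Finset.mem_image.mpr ⟨v, hv, rfl⟩)
    have hadj : M.graph.Adj u ↑v := ⟨huv, e, by omega, by omega⟩
    have hadj' : G'.Adj ⟨u, huSc⟩ v := by
      rw [hG']
      exact hadj
    have : G'.connectedComponentMk ⟨u, huSc⟩ = c := by
      rw [← (hmemT c v).mp hv]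
      exact SimpleGraph.ConnectedComponent.connectedComponentMk_eq_of_adj hadj'
    exact (Finset.mem_sdiff.mp hu).2 (by
      rw [hTV]
      exact Finset.mem_image.mpr ⟨⟨u, huSc⟩, (hmemT c _).mpr this, rfl⟩)
  -- build an injection from odd components into F-edges with an end in S
  set P : Finset E := F.filter (fun e => sInc e = 1) with hP
  set g : {c : G'.ConnectedComponent // Odd (Nat.card c.supp)} → P :=
    fun c => ⟨(hkey c.1 c.2).choose, by
      have h := (hkey c.1 c.2).choose_spec
      rw [hP, Finset.mem_filter]
      exact ⟨h.1, h.2.1⟩⟩ with hg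
  have hginj : Function.Injective g := by
    intro c c' hcc
    have h1 := (hkey c.1 c.2).choose_spec
    have h2 := (hkey c'.1 c'.2).choose_spec
    have heq : (hkey c.1 c.2).choose = (hkey c'.1 c'.2).choose := congrArg Subtype.val hcc
    set e := (hkey c.1 c.2).choose
    rw [← heq] at h2
    by_contra hne
    have hTdisj : Disjoint (TV c.1) (TV c'.1) := by
      rw [Finset.disjoint_left]
      intro u hu hu'
      rw [hTV] at hu hu'
      obtain ⟨a, ha, rfl⟩ := Finset.mem_image.mp hu
      obtain ⟨b, hb, hba⟩ := Finset.mem_image.mp hu'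
      have hba' : b = a := Subtype.val_injective hba
      rw [hba'] at hb
      have := ((hmemT c.1 a).mp ha).symm.trans ((hmemT c'.1 a).mp hb)
      exact hne (Subtype.ext this)
    have hunion : ∑ u ∈ TV c.1 ∪ TV c'.1, M.inc e u = 2 := by
      rw [Finset.sum_union hTdisj, hsumTV, hsumTV, h1.2.2, h2.2.2]
    have hsubU : TV c.1 ∪ TV c'.1 ⊆ Sᶜ := Finset.union_subset (hTVsub _) (hTVsub _)
    have hle2 : (2 : ℕ) ≤ ∑ u ∈ Sᶜ, M.inc e u := by
      rw [← hunion]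
      exact Finset.sum_le_sum_of_subset hsubU
    have := hsplit e
    have := h1.2.1
    omega
  -- counting
  have hcount : M.oddComp ↑S ≤ P.card := by
    have h1 : Nat.card {c : G'.ConnectedComponent // Odd (Nat.card c.supp)} ≤ Nat.card P :=
      Nat.card_le_card_of_injective g hginj
    rw [Nat.card_eq_finsetCard] at h1
    exact h1
  have hPsum : P.card ≤ ∑ e ∈ F, sInc e := by
    calc P.card = ∑ e ∈ P, 1 := by rw [Finset.card_eq_sum_ones]
    _ = ∑ e ∈ P, sInc e := by
        refine Finset.sum_congr rfl fun e he => ?_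
        rw [hP, Finset.mem_filter] at he
        omega
    _ ≤ ∑ e ∈ F, sInc e :=
        Finset.sum_le_sum_of_subset (by rw [hP]; exact Finset.filter_subset _ _)
  have hswap : ∑ e ∈ F, sInc e = ∑ v ∈ S, degF v := Finset.sum_comm
  have hfin : ∑ v ∈ S, degF v ≤ ∑ v ∈ S, f v := Finset.sum_le_sum hLeIn
  omega
end

section
/- Let G be a finite multigraph with a 2-end-coloring in which every end incident to a vertex outside S is colored green, and let C be a connected component of G − S of odd order. If F is a subgraph with no edge of F joining C to the rest of the graph, then some vertex v of C has Φ_F(v) equal to a nonpositive even integer; in particular Φ_F(v) ∉ J_f*(v) for any f : V(G) → ℤ⁺. -/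
/-- If all ends incident to vertices outside `S` are green, `C` is an odd-order
connected component of `G - S`, and no edge of the subgraph `F` joins `C` to the rest
of the graph, then some vertex of `C` has nonpositive even colored degree in `F`;
in particular its colored degree lies in no `J_f*`. -/
theorem odd_component_has_even_nonpos_vertex {V E : Type*} [Fintype V] [Fintype E]
    (M : Multigraph V E) (w : E → V → ℤ) (hw : M.IsColoring w)
    (S : Finset V)
    (hcol : ∀ e v, v ∉ S → 0 < M.inc e v → w e v < 0)
    (c : (M.graph.induce ((↑S : Set V)ᶜ)).ConnectedComponent)
    (hodd : Odd (Nat.card c.supp))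
    (F : Finset E)
    (hsep : ∀ e ∈ F, ¬((∃ x ∈ Subtype.val '' c.supp, 0 < M.inc e x) ∧
        ∃ y ∉ Subtype.val '' c.supp, 0 < M.inc e y)) :
    ∃ v ∈ Subtype.val '' c.supp, Multigraph.cdeg w F v ≤ 0 ∧
      Even (Multigraph.cdeg w F v) ∧
      ∀ f : V → ℕ, (∀ u, 0 < f u) → Multigraph.cdeg w F v ∉ Jstar f v := by
  classical
  set C : Set V := Subtype.val '' c.supp with hCdef
  set Cs : Finset V := C.toFinset with hCsdef
  have memCs : ∀ v, v ∈ Cs ↔ v ∈ C := fun v => Set.mem_toFinset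
  have hnotS : ∀ v ∈ C, v ∉ S := by
    rintro v ⟨⟨x, hx⟩, -, rfl⟩
    simpa using hx
  have hw_eq : ∀ e v, M.inc e v = 0 → w e v = 0 := fun e v h =>
    Int.natAbs_eq_zero.mp (by rw [hw e v, h])
  have hw_nonpos : ∀ v ∈ C, ∀ e, w e v ≤ 0 := by
    intro v hv e
    by_cases h : 0 < M.inc e v
    · exact (hcol e v (hnotS v hv) h).le
    · exact le_of_eq (hw_eq e v (Nat.eq_zero_of_not_pos h))
  -- every edge contributes an even amount to the total over C
  have hedge : ∀ e ∈ F, Even (∑ v ∈ Cs, w e v) := by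
    intro e he
    by_cases hx : ∃ x ∈ C, 0 < M.inc e x
    · have hy : ∀ y, y ∉ C → M.inc e y = 0 := by
        intro y hyC
        by_contra h
        exact hsep e he ⟨hx, y, hyC, Nat.pos_of_ne_zero h⟩
      have hall : ∀ v, w e v = -(M.inc e v : ℤ) := by
        intro v
        by_cases hvC : v ∈ C
        · by_cases hp : 0 < M.inc e v
          · have hneg := hcol e v (hnotS v hvC) hp
            have h1 := hw e v
            omega
          · have h0 : M.inc e v = 0 := Nat.eq_zero_of_not_pos hp
            rw [hw_eq e v h0, h0]; simp
        · have h0 := hy v hvC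
          rw [hw_eq e v h0, h0]; simp
      have hsum : ∑ v ∈ Cs, w e v = ∑ v : V, w e v :=
        Finset.sum_subset (Finset.subset_univ Cs)
          (fun v _ hv => hw_eq e v (hy v (fun hvC => hv ((memCs v).mpr hvC))))
      have h2c : (∑ v : V, (M.inc e v : ℤ)) = 2 := by
        rw [← Nat.cast_sum, M.degSum e]; norm_num
      have : ∑ v : V, w e v = -2 := by
        rw [Finset.sum_congr rfl (fun v _ => hall v), Finset.sum_neg_distrib, h2c]
      rw [hsum, this]
      decide
    · push_neg at hx
      have : ∀ v ∈ Cs, w e v = 0 := by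
        intro v hv
        exact hw_eq e v (Nat.eq_zero_of_not_pos (fun hp =>
          absurd hp (by simpa using (hx v ((memCs v).mp hv)).not_gt)))
      rw [Finset.sum_congr rfl this]
      simp
  have htot : Even (∑ v ∈ Cs, Multigraph.cdeg w F v) := by
    unfold Multigraph.cdeg
    rw [Finset.sum_comm]
    exact Finset.even_sum _ hedge
  have hcard : Odd Cs.card := by
    have h1 : Cs.card = Nat.card C := by
      rw [hCsdef, Set.toFinset_card, Nat.card_eq_fintype_card]
    have h2 : Nat.card C = Nat.card c.supp := by
      rw [hCdef]
      exact Nat.card_image_of_injective Subtype.val_injective _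
    rw [h1, h2]; exact hodd
  -- parity: some vertex has even colored degree
  have hvex : ∃ v ∈ Cs, Even (Multigraph.cdeg w F v) := by
    by_contra h
    push_neg at h
    have hoddall : ∀ v ∈ Cs, Odd (Multigraph.cdeg w F v) :=
      fun v hv => Int.not_even_iff_odd.mp (h v hv)
    have hcast : ((∑ v ∈ Cs, Multigraph.cdeg w F v : ℤ) : ZMod 2) = 0 := by
      obtain ⟨r, hr⟩ := htot
      rw [hr]; push_cast
      exact CharTwo.add_self_eq_zero _
    have hcast2 : ((∑ v ∈ Cs, Multigraph.cdeg w F v : ℤ) : ZMod 2) = 1 := by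
      push_cast
      have : ∀ v ∈ Cs, ((Multigraph.cdeg w F v : ℤ) : ZMod 2) = 1 := by
        intro v hv
        obtain ⟨k, hk⟩ := hoddall v hv
        rw [hk]; push_cast; simp [show ((2:ZMod 2)) = 0 from by decide]
      rw [Finset.sum_congr rfl this, Finset.sum_const, nsmul_eq_mul, mul_one]
      obtain ⟨m, hm⟩ := hcard
      rw [hm]; push_cast; simp [show ((2:ZMod 2)) = 0 from by decide]
    rw [hcast] at hcast2
    exact zero_ne_one hcast2
  obtain ⟨v, hvCs, hveven⟩ := hvex
  have hvC : v ∈ C := (memCs v).mp hvCs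
  have hle : Multigraph.cdeg w F v ≤ 0 :=
    Finset.sum_nonpos (fun e _ => hw_nonpos v hvC e)
  refine ⟨v, hvC, hle, hveven, ?_⟩
  intro f hf hmem
  rcases hmem with ⟨ho, -⟩ | ⟨ho, -, -⟩ | ⟨-, heq⟩
  · exact (Int.not_odd_iff_even.mpr hveven) ho
  · exact (Int.not_odd_iff_even.mpr hveven) ho
  · have : (0 : ℤ) < (f v : ℤ) := by exact_mod_cast hf v
    omega
end

section
/- Let I be an allowed set of integers (every gap between consecutive elements is at most 2), f a positive even integer, and J* = {…,−5,−3,−1,1,3,…,f−1,f}. Suppose min I ≤ f − 1, and suppose I and J* satisfy: (i) if u−1, u+1 ∈ I and u ∉ I then u ∈ J* and u±1 ∉ J*; (ii) neither [I] ∩ J* nor [I] \ J* contains two consecutive integers, where [I] is the integer interval from min I to max I. Then max I ≤ f − 1. -/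
/-- `J* = {…, -5, -3, -1, 1, 3, …}` up to `f`, together with `f` itself when `f` is
even: all negative odd integers, all positive odd integers at most `f`, and `f` if
`f` is even. -/
def JstarInt (f : ℤ) : Set ℤ :=
  {k | (Odd k ∧ k < 0) ∨ (Odd k ∧ 0 < k ∧ k ≤ f) ∨ (Even f ∧ k = f)}

/-- Case 1 (`f` even) of the proof of the main theorem: if `I` is an allowed set with
`min I ≤ f - 1` satisfying Lovász's structural conditions (i) and (ii) with respect to
`J* = {…,-5,-3,-1,1,3,…,f-1,f}`, then `max I ≤ f - 1`. -/
theorem case_f_even (I : Finset ℤ) (hne : I.Nonempty)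
    (hallowed : ∀ a ∈ I, ∀ b ∈ I, a < b → (∀ c ∈ I, ¬(a < c ∧ c < b)) → b - a ≤ 2)
    (f : ℤ) (hf : 0 < f) (hfe : Even f)
    (hmin : I.min' hne ≤ f - 1)
    (hi : ∀ u : ℤ, u - 1 ∈ I → u + 1 ∈ I → u ∉ I →
      u ∈ JstarInt f ∧ u + 1 ∉ JstarInt f ∧ u - 1 ∉ JstarInt f)
    (hii : ∀ u : ℤ,
      ¬(u ∈ Set.Icc (I.min' hne) (I.max' hne) ∩ JstarInt f ∧
        u + 1 ∈ Set.Icc (I.min' hne) (I.max' hne) ∩ JstarInt f) ∧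
      ¬(u ∈ Set.Icc (I.min' hne) (I.max' hne) \ JstarInt f ∧
        u + 1 ∈ Set.Icc (I.min' hne) (I.max' hne) \ JstarInt f)) :
    I.max' hne ≤ f - 1 := by
  by_contra h
  push_neg at h
  have hmax : f ≤ I.max' hne := by omega
  obtain ⟨k, hk⟩ := hfe
  exact (hii (f - 1)).1
    ⟨⟨Set.mem_Icc.2 ⟨hmin, by omega⟩, Or.inr (Or.inl ⟨⟨k - 1, by omega⟩, by omega, by omega⟩)⟩,
     ⟨Set.mem_Icc.2 ⟨by omega, by omega⟩, Or.inr (Or.inr ⟨⟨k, hk⟩, by ring⟩)⟩⟩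
end

section
/- Let G be a finite multigraph with a 2-end-coloring, f : V(G) → ℤ⁺, and let F be a spanning subgraph with Φ_F(v) ∈ J_f*(v) for every vertex v. Suppose every end at a vertex of S is red and every other end is green, for some vertex subset S. If every odd-order component C of G − S has an F-edge joining C to S, then o(G − S) ≤ f(S). -/
/-- If every end at a vertex of `S` is red and every other end is green, `F` is a
colored `J_f*`-factor, and every odd-order component `C` of `G - S` is joined to `S`
by some edge of `F`, then `o(G - S) ≤ f(S)`. -/
theorem odd_comp_le_of_factor {V E : Type*} [Fintype V] [Fintype E]
    (M : Multigraph V E) (w : E → V → ℤ) (hw : M.IsColoring w)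
    (f : V → ℕ) (hf : ∀ v, 0 < f v) (S : Finset V)
    (hcol : ∀ e v, 0 < M.inc e v → ((v ∈ S → 0 < w e v) ∧ (v ∉ S → w e v < 0)))
    (F : Finset E) (hF : ∀ v, Multigraph.cdeg w F v ∈ Jstar f v)
    (hdry : ∀ c : (M.graph.induce ((↑S : Set V)ᶜ)).ConnectedComponent,
      Odd (Nat.card c.supp) →
        ∃ e ∈ F, (∃ s ∈ S, 0 < M.inc e s) ∧
          ∃ x ∈ Subtype.val '' c.supp, 0 < M.inc e x) :
    M.oddComp ↑S ≤ ∑ v ∈ S, f v := by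

  classical
  have hwS : ∀ s ∈ S, ∀ e : E, w e s = (M.inc e s : ℤ) := by
    intro s hs e
    rcases Nat.eq_zero_or_pos (M.inc e s) with h | h
    · have h0 := hw e s
      rw [h] at h0
      rw [Int.natAbs_eq_zero.mp h0, h, Nat.cast_zero]
    · have hpos := (hcol e s h).1 hs
      rw [← hw e s, Int.natAbs_of_nonneg hpos.le]
  set T := F.filter (fun e => (∃ s ∈ S, 0 < M.inc e s) ∧ ∃ x, x ∉ S ∧ 0 < M.inc e x) with hT
  have key : ∀ c : (M.graph.induce ((↑S : Set V)ᶜ)).ConnectedComponent,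
      Odd (Nat.card c.supp) → ∃ e ∈ T, ∃ y ∈ c.supp, 0 < M.inc e y.val := by
    intro c hc
    obtain ⟨e, heF, hs, x, hx, hincx⟩ := hdry c hc
    obtain ⟨y, hy, rfl⟩ := hx
    refine ⟨e, ?_, y, hy, hincx⟩
    rw [hT, Finset.mem_filter]
    exact ⟨heF, hs, y.val, fun h => y.prop (Finset.mem_coe.mpr h), hincx⟩
  have step1 : M.oddComp ↑S ≤ T.card := by
    let g : {c : (M.graph.induce ((↑S : Set V)ᶜ)).ConnectedComponent //
        Odd (Nat.card c.supp)} → {e // e ∈ T} :=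
      fun c => ⟨(key c.1 c.2).choose, ((key c.1 c.2).choose_spec).1⟩
    have hginj : Function.Injective g := by
      intro c1 c2 hgc
      obtain ⟨y1, hy1, hinc1⟩ := (key c1.1 c1.2).choose_spec.2
      obtain ⟨y2, hy2, hinc2⟩ := (key c2.1 c2.2).choose_spec.2
      have he2 : (key c2.1 c2.2).choose = (key c1.1 c1.2).choose :=
        (congrArg Subtype.val hgc).symm
      set e := (key c1.1 c1.2).choose with he
      have heT : e ∈ T := (key c1.1 c1.2).choose_spec.1
      rw [hT, Finset.mem_filter] at heT
      obtain ⟨-, ⟨s, hs, hincs⟩, -⟩ := heT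
      rw [he2] at hinc2
      have hy1S : (y1 : V) ∉ S := fun h => y1.prop (Finset.mem_coe.mpr h)
      have hy2S : (y2 : V) ∉ S := fun h => y2.prop (Finset.mem_coe.mpr h)
      have hs1 : s ≠ (y1 : V) := fun h => hy1S (h ▸ hs)
      have hs2 : s ≠ (y2 : V) := fun h => hy2S (h ▸ hs)
      have hy12 : (y1 : V) = (y2 : V) := by
        by_contra hne
        have hd := M.degSum e
        have h1 : s ∉ ({(y1 : V), (y2 : V)} : Finset V) := by simp [hs1, hs2]
        have h2 : (y1 : V) ∉ ({(y2 : V)} : Finset V) := by simp [hne]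
        have hle : ∑ v ∈ ({s, (y1 : V), (y2 : V)} : Finset V), M.inc e v ≤ 2 :=
          hd ▸ Finset.sum_le_sum_of_subset (Finset.subset_univ _)
        rw [Finset.sum_insert h1, Finset.sum_insert h2, Finset.sum_singleton] at hle
        omega
      have hy : y1 = y2 := Subtype.ext hy12
      rw [SimpleGraph.ConnectedComponent.mem_supp_iff] at hy1 hy2
      apply Subtype.ext
      rw [← hy1, ← hy2, hy]
    have hle := Nat.card_le_card_of_injective g hginj
    have hc2 : Nat.card {e // e ∈ T} = T.card := by
      exact Nat.card_eq_finsetCard T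
    unfold Multigraph.oddComp
    rw [← hc2]
    exact hle
  have step2 : T.card ≤ ∑ v ∈ S, f v := by
    have hone : ∀ e ∈ T, ∑ s ∈ S, M.inc e s = 1 := by
      intro e he
      rw [hT, Finset.mem_filter] at he
      obtain ⟨heF, ⟨s, hs, hincs⟩, x, hx, hincx⟩ := he
      have hd := M.degSum e
      have hxS : x ∉ S := hx
      have hsub : ∑ v ∈ insert x S, M.inc e v ≤ 2 :=
        hd ▸ Finset.sum_le_sum_of_subset (Finset.subset_univ _)
      rw [Finset.sum_insert hxS] at hsub
      have hge : M.inc e s ≤ ∑ v ∈ S, M.inc e v :=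
        Finset.single_le_sum (f := fun v => M.inc e v) (fun _ _ => Nat.zero_le _) hs
      omega
    have hvert : ∀ s ∈ S, ∑ e ∈ T, M.inc e s ≤ f s := by
      intro s hs
      have hcast : ((∑ e ∈ T, M.inc e s : ℕ) : ℤ) = ∑ e ∈ T, w e s := by
        push_cast
        exact Finset.sum_congr rfl fun e _ => (hwS s hs e).symm
      have hsub : ∑ e ∈ T, w e s ≤ ∑ e ∈ F, w e s := by
        apply Finset.sum_le_sum_of_subset_of_nonneg (Finset.filter_subset _ _)
        intro e _ _
        rw [hwS s hs e]
        exact Int.natCast_nonneg _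
      have hcd : Multigraph.cdeg w F s ≤ (f s : ℤ) := by
        rcases hF s with ⟨_, hneg⟩ | ⟨_, _, hle⟩ | ⟨_, heq⟩
        · exact hneg.le.trans (Int.natCast_nonneg _)
        · exact hle
        · exact le_of_eq heq
      have : ((∑ e ∈ T, M.inc e s : ℕ) : ℤ) ≤ (f s : ℤ) := by
        rw [hcast]
        exact hsub.trans hcd
      exact_mod_cast this
    calc T.card = ∑ e ∈ T, ∑ s ∈ S, M.inc e s := by
          rw [Finset.card_eq_sum_ones]
          exact Finset.sum_congr rfl fun e he => (hone e he).symm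
      _ = ∑ s ∈ S, ∑ e ∈ T, M.inc e s := Finset.sum_comm
      _ ≤ ∑ s ∈ S, f s := Finset.sum_le_sum hvert
  exact step1.trans step2
end

section
/- Let I be an allowed set of integers, f a positive odd integer, and J* = {…,−5,−3,−1,1,3,…,f}. Suppose min I ≤ f − 1 and suppose that neither [I] ∩ J* nor [I] \ J* contains a pair of consecutive integers, where [I] is the integer interval from min I to max I. If additionally f + 2 ∉ I whenever f + 1 ∈ I (i.e., I contains no element exceeding f + 1 adjacent in [I] to an element of I \ J*), then max I ≤ f + 1. -/
/-- Case 2 (`f` odd) of the proof of the main theorem: if `I` is an allowed set with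
`min I ≤ f - 1`, neither `[I] ∩ J*` nor `[I] \ J*` contains two consecutive integers,
and `f + 2 ∉ I` whenever `f + 1 ∈ I`, then `max I ≤ f + 1`. -/
theorem case_f_odd (I : Finset ℤ) (hne : I.Nonempty)
    (hallowed : ∀ a ∈ I, ∀ b ∈ I, a < b → (∀ c ∈ I, ¬(a < c ∧ c < b)) → b - a ≤ 2)
    (f : ℤ) (hf : 0 < f) (hfo : Odd f)
    (hmin : I.min' hne ≤ f - 1)
    (hii : ∀ u : ℤ,
      ¬(u ∈ Set.Icc (I.min' hne) (I.max' hne) ∩ JstarInt f ∧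
        u + 1 ∈ Set.Icc (I.min' hne) (I.max' hne) ∩ JstarInt f) ∧
      ¬(u ∈ Set.Icc (I.min' hne) (I.max' hne) \ JstarInt f ∧
        u + 1 ∈ Set.Icc (I.min' hne) (I.max' hne) \ JstarInt f))
    (hstep : (f + 1 : ℤ) ∈ I → (f + 2 : ℤ) ∉ I) :
    I.max' hne ≤ f + 1 := by
  obtain ⟨k, hk⟩ := hfo
  by_contra h
  push_neg at h
  have hmax : f + 2 ≤ I.max' hne := by omega
  have hnj1 : (f + 1 : ℤ) ∉ JstarInt f := by
    rintro (⟨ho, _⟩ | ⟨ho, _, _⟩ | ⟨he, _⟩) <;>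
      first
        | (rw [Int.odd_iff] at ho; omega)
        | (rw [Int.even_iff] at he; omega)
  have hnj2 : (f + 2 : ℤ) ∉ JstarInt f := by
    rintro (⟨ho, hlt⟩ | ⟨ho, _, hle⟩ | ⟨he, _⟩) <;>
      first
        | omega
        | (rw [Int.even_iff] at he; omega)
  exact (hii (f + 1)).2 ⟨⟨⟨by linarith, by linarith⟩, hnj1⟩,
    ⟨⟨by linarith, by linarith⟩, by simpa [add_assoc] using hnj2⟩⟩
end
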